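/- Let μ = e^{2πi/7} and η = μ + μ² + μ⁴. Then the ring ℤ[μ] is a free ℤ[η]-module of rank 3 with basis {1, μ, μ²}, i.e., ℤ[μ] = ℤ[η] ⊕ μℤ[η] ⊕ μ²ℤ[η]. -/

import Mathlib

open Complex


open Complex Polynomial

private lemma mem_closure_singleton_iff' (x z : ℂ) :
    z ∈ Subring.closure ({x} : Set ℂ) ↔ ∃ p : ℤ[X], aeval x p = z := by
  rw [show (z ∈ Subring.closure ({x} : Set ℂ)) ↔ z ∈ Algebra.adjoin ℤ ({x} : Set ℂ) from by
      rw [Algebra.adjoin_int]; rfl,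
    Algebra.adjoin_singleton_eq_range_aeval, AlgHom.mem_range]

private lemma mem_eta' (x z : ℂ) (hx : x ^ 2 + x + 2 = 0) :
    z ∈ Subring.closure ({x} : Set ℂ) ↔ ∃ u v : ℤ, z = u + v * x := by
  rw [mem_closure_singleton_iff']
  constructor
  · rintro ⟨p, rfl⟩
    set m : ℤ[X] := X ^ 2 + X + C 2 with hm
    have hmonic : m.Monic := by rw [hm]; monicity!
    have hm1 : m ≠ 1 := by
      intro h
      have := congrArg (Polynomial.coeff · 2) h
      simp [hm, Polynomial.coeff_one, Polynomial.coeff_X] at this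
    have hdeg : (p %ₘ m).natDegree < 2 := by
      have := Polynomial.natDegree_modByMonic_lt p hmonic hm1
      have h2 : m.natDegree = 2 := by rw [hm]; compute_degree!
      omega
    have haevalm : aeval x m = 0 := by
      rw [hm]; simp [map_ofNat]; linear_combination hx
    have key : aeval x p = aeval x (p %ₘ m) := by
      conv_lhs => rw [← Polynomial.modByMonic_add_div p m]
      simp [haevalm]
    refine ⟨(p %ₘ m).coeff 0, (p %ₘ m).coeff 1, ?_⟩
    rw [key, Polynomial.aeval_eq_sum_range' hdeg]
    simp [Finset.sum_range_succ, zsmul_eq_mul]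
  · rintro ⟨u, v, rfl⟩
    exact ⟨C u + C v * X, by simp⟩

private lemma mem_mu' (x z : ℂ) (hx : x ^ 6 + x ^ 5 + x ^ 4 + x ^ 3 + x ^ 2 + x + 1 = 0) :
    z ∈ Subring.closure ({x} : Set ℂ) ↔ ∃ n0 n1 n2 n3 n4 n5 : ℤ,
      z = n0 + n1 * x + n2 * x ^ 2 + n3 * x ^ 3 + n4 * x ^ 4 + n5 * x ^ 5 := by
  rw [mem_closure_singleton_iff']
  constructor
  · rintro ⟨p, rfl⟩
    set m : ℤ[X] := X ^ 6 + X ^ 5 + X ^ 4 + X ^ 3 + X ^ 2 + X + C 1 with hm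
    have hmonic : m.Monic := by rw [hm]; monicity!
    have hm1 : m ≠ 1 := by
      intro h
      have := congrArg (Polynomial.coeff · 6) h
      simp [hm, Polynomial.coeff_one, Polynomial.coeff_X] at this
    have hdeg : (p %ₘ m).natDegree < 6 := by
      have := Polynomial.natDegree_modByMonic_lt p hmonic hm1
      have h2 : m.natDegree = 6 := by rw [hm]; compute_degree!
      omega
    have haevalm : aeval x m = 0 := by
      rw [hm]; simp [map_ofNat]; linear_combination hx
    have key : aeval x p = aeval x (p %ₘ m) := by
      conv_lhs => rw [← Polynomial.modByMonic_add_div p m]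
      simp [haevalm]
    refine ⟨(p %ₘ m).coeff 0, (p %ₘ m).coeff 1, (p %ₘ m).coeff 2, (p %ₘ m).coeff 3,
      (p %ₘ m).coeff 4, (p %ₘ m).coeff 5, ?_⟩
    rw [key, Polynomial.aeval_eq_sum_range' hdeg]
    simp [Finset.sum_range_succ, zsmul_eq_mul]
  · rintro ⟨n0, n1, n2, n3, n4, n5, rfl⟩
    exact ⟨C n0 + C n1 * X + C n2 * X ^ 2 + C n3 * X ^ 3 + C n4 * X ^ 4 + C n5 * X ^ 5, by simp⟩

private lemma indep' (μ : ℂ) (hμ : μ = exp (2 * Real.pi * I / 7))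
    (k0 k1 k2 k3 k4 k5 : ℤ)
    (h : (k0 : ℂ) + k1 * μ + k2 * μ ^ 2 + k3 * μ ^ 3 + k4 * μ ^ 4 + k5 * μ ^ 5 = 0) :
    k0 = 0 ∧ k1 = 0 ∧ k2 = 0 ∧ k3 = 0 ∧ k4 = 0 ∧ k5 = 0 := by
  have hprim : IsPrimitiveRoot μ 7 := by
    rw [hμ]
    exact Complex.isPrimitiveRoot_exp 7 (by norm_num)
  set p : ℚ[X] := C (k0 : ℚ) + C (k1 : ℚ) * X + C (k2 : ℚ) * X ^ 2 + C (k3 : ℚ) * X ^ 3 +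
    C (k4 : ℚ) * X ^ 4 + C (k5 : ℚ) * X ^ 5 with hp
  have haeval : aeval μ p = 0 := by
    rw [hp]
    simp only [map_add, map_mul, map_pow, aeval_C, aeval_X]
    push_cast
    convert h using 2 <;> norm_cast
  have hp0 : p = 0 := by
    by_contra hne
    have hdvd : minpoly ℚ μ ∣ p := minpoly.dvd ℚ μ haeval
    have hle : (minpoly ℚ μ).natDegree ≤ p.natDegree :=
      Polynomial.natDegree_le_natDegree (Polynomial.degree_le_of_dvd hdvd hne)
    have hmin : minpoly ℚ μ = cyclotomic 7 ℚ :=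
      (Polynomial.cyclotomic_eq_minpoly_rat hprim (by norm_num)).symm
    have h6 : (minpoly ℚ μ).natDegree = 6 := by
      rw [hmin, Polynomial.natDegree_cyclotomic]
      decide
    have hple : p.natDegree ≤ 5 := by rw [hp]; compute_degree!
    omega
  have hc : ∀ j : ℕ, p.coeff j = 0 := by intro j; rw [hp0]; simp
  refine ⟨?_, ?_, ?_, ?_, ?_, ?_⟩
  · have := hc 0; rw [hp] at this
    simp only [Polynomial.coeff_add, Polynomial.coeff_C_mul, Polynomial.coeff_X_pow,
      Polynomial.coeff_C, Polynomial.coeff_X] at this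
    norm_num at this; exact_mod_cast this
  · have := hc 1; rw [hp] at this
    simp only [Polynomial.coeff_add, Polynomial.coeff_C_mul, Polynomial.coeff_X_pow,
      Polynomial.coeff_C, Polynomial.coeff_X] at this
    norm_num at this; exact_mod_cast this
  · have := hc 2; rw [hp] at this
    simp only [Polynomial.coeff_add, Polynomial.coeff_C_mul, Polynomial.coeff_X_pow,
      Polynomial.coeff_C, Polynomial.coeff_X] at this
    norm_num at this; exact_mod_cast this
  · have := hc 3; rw [hp] at this
    simp only [Polynomial.coeff_add, Polynomial.coeff_C_mul, Polynomial.coeff_X_pow,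
      Polynomial.coeff_C, Polynomial.coeff_X] at this
    norm_num at this; exact_mod_cast this
  · have := hc 4; rw [hp] at this
    simp only [Polynomial.coeff_add, Polynomial.coeff_C_mul, Polynomial.coeff_X_pow,
      Polynomial.coeff_C, Polynomial.coeff_X] at this
    norm_num at this; exact_mod_cast this
  · have := hc 5; rw [hp] at this
    simp only [Polynomial.coeff_add, Polynomial.coeff_C_mul, Polynomial.coeff_X_pow,
      Polynomial.coeff_C, Polynomial.coeff_X] at this
    norm_num at this; exact_mod_cast this

/-- ℤ[μ] is a free ℤ[η]-module of rank 3 with basis {1, μ, μ²}: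
existence and uniqueness of the decomposition z = a + μ b + μ² c with a,b,c ∈ ℤ[η]. -/
theorem Zmu_free_over_Zeta
    (μ η : ℂ) (hμ : μ = exp (2 * Real.pi * I / 7)) (hη : η = μ + μ ^ 2 + μ ^ 4) :
    (∀ z : ℂ, z ∈ Subring.closure {μ} ↔
      ∃ a b c : ℂ, a ∈ Subring.closure {η} ∧ b ∈ Subring.closure {η} ∧
        c ∈ Subring.closure {η} ∧ z = a + μ * b + μ ^ 2 * c) ∧
    (∀ a b c a' b' c' : ℂ,
      a ∈ Subring.closure {η} → b ∈ Subring.closure {η} → c ∈ Subring.closure {η} →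
      a' ∈ Subring.closure {η} → b' ∈ Subring.closure {η} → c' ∈ Subring.closure {η} →
      a + μ * b + μ ^ 2 * c = a' + μ * b' + μ ^ 2 * c' →
      a = a' ∧ b = b' ∧ c = c') := by
  have hprim : IsPrimitiveRoot μ 7 := hμ ▸ Complex.isPrimitiveRoot_exp 7 (by norm_num)
  have hpow : μ ^ 7 = 1 := hprim.pow_eq_one
  have hne1 : μ ≠ 1 := hprim.ne_one (by norm_num)
  have hs : μ ^ 6 + μ ^ 5 + μ ^ 4 + μ ^ 3 + μ ^ 2 + μ + 1 = 0 := by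
    have hmul : (μ - 1) * (μ ^ 6 + μ ^ 5 + μ ^ 4 + μ ^ 3 + μ ^ 2 + μ + 1) = 0 := by
      linear_combination hpow
    rcases mul_eq_zero.1 hmul with h | h
    · exact absurd (by linear_combination h) hne1
    · exact h
  have hηeq : η ^ 2 + η + 2 = 0 := by rw [hη]; linear_combination 2 * hs + μ * hpow
  constructor
  · intro z
    rw [mem_mu' μ z hs]
    constructor
    · rintro ⟨n0, n1, n2, n3, n4, n5, rfl⟩
      refine ⟨((n0 + n3 - n5 : ℤ) : ℂ) + ((n4 : ℤ) : ℂ) * η,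
        ((n1 + n3 - n4 - n5 : ℤ) : ℂ) + ((n3 : ℤ) : ℂ) * η,
        ((n2 - n4 - n5 : ℤ) : ℂ) + ((n3 - n5 : ℤ) : ℂ) * η,
        (mem_eta' η _ hηeq).2 ⟨_, _, rfl⟩, (mem_eta' η _ hηeq).2 ⟨_, _, rfl⟩,
        (mem_eta' η _ hηeq).2 ⟨_, _, rfl⟩, ?_⟩
      rw [hη]; push_cast
      linear_combination (-(n3 : ℂ) + n5) * hs
    · rintro ⟨a, b, c, ha, hb, hc, rfl⟩
      obtain ⟨ua, va, rfl⟩ := (mem_eta' η a hηeq).1 ha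
      obtain ⟨ub, vb, rfl⟩ := (mem_eta' η b hηeq).1 hb
      obtain ⟨uc, vc, rfl⟩ := (mem_eta' η c hηeq).1 hc
      refine ⟨ua - vc, va + ub - vc, va + vb + uc - vc, vb, va, vb - vc, ?_⟩
      rw [hη]; push_cast
      linear_combination (vc : ℂ) * hs
  · intro a b c a' b' c' ha hb hc ha' hb' hc' h0
    obtain ⟨ua, va, rfl⟩ := (mem_eta' η a hηeq).1 ha
    obtain ⟨ub, vb, rfl⟩ := (mem_eta' η b hηeq).1 hb
    obtain ⟨uc, vc, rfl⟩ := (mem_eta' η c hηeq).1 hc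
    obtain ⟨ua', va', rfl⟩ := (mem_eta' η a' hηeq).1 ha'
    obtain ⟨ub', vb', rfl⟩ := (mem_eta' η b' hηeq).1 hb'
    obtain ⟨uc', vc', rfl⟩ := (mem_eta' η c' hηeq).1 hc'
    rw [hη] at h0
    have hz : ((ua - vc - (ua' - vc') : ℤ) : ℂ)
        + ((va + ub - vc - (va' + ub' - vc') : ℤ) : ℂ) * μ
        + ((va + vb + uc - vc - (va' + vb' + uc' - vc') : ℤ) : ℂ) * μ ^ 2
        + ((vb - vb' : ℤ) : ℂ) * μ ^ 3
        + ((va - va' : ℤ) : ℂ) * μ ^ 4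
        + ((vb - vc - (vb' - vc') : ℤ) : ℂ) * μ ^ 5 = 0 := by
      push_cast
      linear_combination h0 + ((vc' : ℂ) - vc) * hs
    obtain ⟨e0, e1, e2, e3, e4, e5⟩ := indep' μ hμ _ _ _ _ _ _ hz
    have h1 : ua = ua' := by omega
    have h2 : va = va' := by omega
    have h3 : ub = ub' := by omega
    have h4 : vb = vb' := by omega
    have h5 : uc = uc' := by omega
    have h6 : vc = vc' := by omega
    exact ⟨by rw [h1, h2], by rw [h3, h4], by rw [h5, h6]⟩
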